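/- Let E and F be topological VE-spaces over the same topologically ordered *-space Z, let S₀(Z) ⊆ S_*(Z) be a family of continuous increasing *-seminorms generating the topology of Z, and let T : E → F be an adjointable linear operator that is S₀(Z)-bounded. Then its adjoint T* : F → E is S₀(Z)-bounded, and p̄(T*) = p̄(T) for every p ∈ S₀(Z). -/

import Mathlib

open scoped ComplexConjugate Topology

/-- The data of an ordered `*`-space structure on a complex vector space `Z`:
a conjugate-linear involution and a strict convex cone of selfadjoint elements. -/
structure OrderedStarData (Z : Type*) [AddCommGroup Z] [Module ℂ Z] where
  star : Z → Z
  star_add : ∀ x y : Z, star (x + y) = star x + star y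
  star_smul : ∀ (c : ℂ) (x : Z), star (c • x) = (starRingEnd ℂ) c • star x
  star_star : ∀ x : Z, star (star x) = x
  cone : Set Z
  cone_zero : (0 : Z) ∈ cone
  cone_add : ∀ x ∈ cone, ∀ y ∈ cone, x + y ∈ cone
  cone_smul : ∀ r : ℝ, 0 ≤ r → ∀ x ∈ cone, (r : ℂ) • x ∈ cone
  cone_strict : ∀ x ∈ cone, -x ∈ cone → x = 0
  cone_star : ∀ x ∈ cone, star x = x

namespace OrderedStarData

variable {Z : Type*} [AddCommGroup Z] [Module ℂ Z]

/-- A seminorm is increasing when `0 ≤ x ≤ y` implies `p x ≤ p y`. -/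
def Increasing (D : OrderedStarData Z) (p : Seminorm ℂ Z) : Prop :=
  ∀ x y : Z, x ∈ D.cone → y - x ∈ D.cone → p x ≤ p y

/-- A `*`-seminorm: `p (z*) = p z`. -/
def StarSeminorm (D : OrderedStarData Z) (p : Seminorm ℂ Z) : Prop :=
  ∀ z : Z, p (D.star z) = p z

end OrderedStarData

/-- A topologically ordered `*`-space: an ordered `*`-space with a Hausdorff locally convex
topology generated by a family of increasing seminorms, continuous involution and closed cone. -/
structure TopOrderedStarSpace (Z : Type*) [AddCommGroup Z] [Module ℂ Z]
    [TopologicalSpace Z] extends OrderedStarData Z where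
  t2 : T2Space Z
  star_continuous : Continuous star
  cone_closed : IsClosed cone
  seminorms_generate : ∃ (ι : Type) (hι : Nonempty ι) (q : ι → Seminorm ℂ Z),
      (∀ i, ∀ x y : Z, x ∈ cone → y - x ∈ cone → q i x ≤ q i y) ∧
      (letI := hι; WithSeminorms q)

namespace TopOrderedStarSpace

variable {Z : Type*} [AddCommGroup Z] [Module ℂ Z] [TopologicalSpace Z]

/-- Membership in `S_*(Z)`, the set of continuous increasing `*`-seminorms. -/
def MemSStar (D : TopOrderedStarSpace Z) (p : Seminorm ℂ Z) : Prop :=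
  Continuous ⇑p ∧ D.toOrderedStarData.Increasing p ∧ D.toOrderedStarData.StarSeminorm p

end TopOrderedStarSpace

/-- The topology of `Z` is generated by the family of seminorms `S`. -/
def GeneratesTopology {Z : Type*} [AddCommGroup Z] [Module ℂ Z] [TopologicalSpace Z]
    (S : Set (Seminorm ℂ Z)) : Prop :=
  ∃ h : Nonempty ↥S, letI := h; WithSeminorms (fun p : ↥S => (p : Seminorm ℂ Z))

/-- A `Z`-valued gramian (vector valued inner product) on `E`, making `E` a VE-space over `Z`. -/
structure Gramian {Z : Type*} [AddCommGroup Z] [Module ℂ Z] (D : OrderedStarData Z)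
    (E : Type*) [AddCommGroup E] [Module ℂ E] where
  inner : E → E → Z
  inner_self_mem : ∀ x : E, inner x x ∈ D.cone
  inner_self_eq_zero : ∀ x : E, inner x x = 0 → x = 0
  inner_herm : ∀ x y : E, inner x y = D.star (inner y x)
  inner_add_right : ∀ x y₁ y₂ : E, inner x (y₁ + y₂) = inner x y₁ + inner x y₂
  inner_smul_right : ∀ (a : ℂ) (x y : E), inner x (a • y) = a • inner x y

namespace Gramian

variable {Z : Type*} [AddCommGroup Z] [Module ℂ Z] {D : OrderedStarData Z}
  {E : Type*} [AddCommGroup E] [Module ℂ E]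
  {F : Type*} [AddCommGroup F] [Module ℂ F]

/-- The seminorm `p̃ x = p ([x,x])^{1/2}` induced on a VE-space by a seminorm on `Z`. -/
noncomputable def tilde (B : Gramian D E) (p : Seminorm ℂ Z) (x : E) : ℝ :=
  Real.sqrt (p (B.inner x x))

/-- `S` is an adjoint of `T` : `[Tx, y] = [x, Sy]`. -/
def IsAdjoint (BE : Gramian D E) (BF : Gramian D F) (T : E →ₗ[ℂ] F) (S : F →ₗ[ℂ] E) : Prop :=
  ∀ (x : E) (y : F), BF.inner (T x) y = BE.inner x (S y)

/-- `T` is adjointable. -/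
def Adjointable (BE : Gramian D E) (BF : Gramian D F) (T : E →ₗ[ℂ] F) : Prop :=
  ∃ S : F →ₗ[ℂ] E, BE.IsAdjoint BF T S

/-- `T` is bounded for the seminorm `p` : `p̃ (Tx) ≤ C p̃ x`. -/
def BoundedFor (BE : Gramian D E) (BF : Gramian D F) (T : E →ₗ[ℂ] F) (p : Seminorm ℂ Z) : Prop :=
  ∃ C : ℝ, 0 ≤ C ∧ ∀ x : E, BF.tilde p (T x) ≤ C * BE.tilde p x

/-- The operator seminorm `p̄ T`, the infimum of the admissible bounds. -/
noncomputable def opSeminorm (BE : Gramian D E) (BF : Gramian D F) (T : E →ₗ[ℂ] F)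
    (p : Seminorm ℂ Z) : ℝ :=
  sInf {C : ℝ | 0 ≤ C ∧ ∀ x : E, BF.tilde p (T x) ≤ C * BE.tilde p x}

/-- The topology of `E` is the one of a topological VE-space: it is generated by the
seminorms `p̃` for `p ∈ S`. -/
def IsVETopology [TopologicalSpace E] (B : Gramian D E) (S : Set (Seminorm ℂ Z)) : Prop :=
  ∃ h : Nonempty ↥S, letI := h;
    ∃ q : ↥S → Seminorm ℂ E, (∀ (p : ↥S) (x : E), q p x = B.tilde p.1 x) ∧ WithSeminorms q

end Gramian

/-- A barrel: a closed, absorbent, balanced, convex set. -/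
def IsBarrel {E : Type*} [AddCommGroup E] [Module ℂ E] [TopologicalSpace E] (s : Set E) : Prop :=
  IsClosed s ∧ Absorbent ℂ s ∧ Balanced ℂ s ∧ Convex ℝ s

/-- A (complex) topological vector space is barrelled if every barrel is a neighbourhood of `0`. -/
def BarrelledSp (E : Type*) [AddCommGroup E] [Module ℂ E] [TopologicalSpace E] : Prop :=
  ∀ s : Set E, IsBarrel s → s ∈ 𝓝 (0 : E)

/-- A barrel with respect to the topology of a norm function `N`. -/
def IsBarrelWrtNorm {V : Type*} [AddCommGroup V] [Module ℂ V] (N : V → ℝ) (s : Set V) : Prop :=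
  (∀ x : V, (∀ ε : ℝ, 0 < ε → ∃ y ∈ s, N (x - y) < ε) → x ∈ s) ∧
  Absorbent ℂ s ∧ Balanced ℂ s ∧ Convex ℝ s

/-- Barrelledness with respect to the topology of a norm function `N`. -/
def BarrelledWrtNorm {V : Type*} [AddCommGroup V] [Module ℂ V] (N : V → ℝ) : Prop :=
  ∀ s : Set V, IsBarrelWrtNorm N s → ∃ ε : ℝ, 0 < ε ∧ ∀ x : V, N x < ε → x ∈ s

/-- The kernel of a seminorm, as a submodule. -/
def semKer {Z : Type*} [AddCommGroup Z] [Module ℂ Z] (p : Seminorm ℂ Z) : Submodule ℂ Z where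
  carrier := {z | p z = 0}
  add_mem' := by
    intro a b ha hb
    simp only [Set.mem_setOf_eq] at ha hb ⊢
    exact le_antisymm ((map_add_le_add p a b).trans (by simp [ha, hb])) (apply_nonneg p _)
  zero_mem' := map_zero p
  smul_mem' := by
    intro c x hx
    simp only [Set.mem_setOf_eq] at hx ⊢
    rw [map_smul_eq_mul, hx, mul_zero]


section AuxProof

variable {Z : Type*} [AddCommGroup Z] [Module ℂ Z]

/-- Hahn–Banach for increasing `*`-seminorms: a positive, selfadjoint, `ℂ`-linear functional
dominated by `p` on the cone and attaining `p` at a given positive element. -/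
theorem OrderedStarData.exists_pos_functional (D : OrderedStarData Z) (p : Seminorm ℂ Z)
    (hinc : D.Increasing p) (hstar : D.StarSeminorm p) (z₀ : Z) (hz₀ : z₀ ∈ D.cone) :
    ∃ f : Z → ℂ,
      (∀ x y, f (x + y) = f x + f y) ∧
      (∀ (a : ℂ) (x : Z), f (a • x) = a * f x) ∧
      (∀ z, f (D.star z) = (starRingEnd ℂ) (f z)) ∧
      (∀ c ∈ D.cone, ∃ r : ℝ, 0 ≤ r ∧ r ≤ p c ∧ f c = (r : ℂ)) ∧
      f z₀ = (p z₀ : ℂ) := by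
  by_cases hz₀0 : z₀ = 0
  · refine ⟨fun _ => 0, by simp, by simp, by simp,
      fun c _ => ⟨0, le_rfl, apply_nonneg p c, by simp⟩, ?_⟩
    simp [hz₀0]
  -- the sublinear functional q
  set A : Z → Set ℝ := fun w => (fun c => p (w + c)) '' D.cone with hA
  have hAne : ∀ w, (A w).Nonempty := fun w => ⟨p (w + 0), ⟨0, D.cone_zero, rfl⟩⟩
  have hAbdd : ∀ w, BddBelow (A w) := by
    intro w
    refine ⟨0, ?_⟩
    rintro r ⟨c, _, rfl⟩
    exact apply_nonneg p _
  set q : Z → ℝ := fun w => sInf (A w) with hqdef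
  have hq_le : ∀ w, ∀ c ∈ D.cone, q w ≤ p (w + c) := by
    intro w c hc
    exact csInf_le (hAbdd w) ⟨c, hc, rfl⟩
  have hq_nonneg : ∀ w, 0 ≤ q w := by
    intro w
    refine le_csInf (hAne w) ?_
    rintro r ⟨c, _, rfl⟩
    exact apply_nonneg p _
  have hq_le_p : ∀ w, q w ≤ p w := by
    intro w
    have := hq_le w 0 D.cone_zero
    simpa using this
  have hq_neg : ∀ c ∈ D.cone, q (-c) ≤ 0 := by
    intro c hc
    have := hq_le (-c) c hc
    simpa using this
  have N_add : ∀ x y : Z, q (x + y) ≤ q x + q y := by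
    intro x y
    by_contra hcon
    push_neg at hcon
    set ε : ℝ := (q (x + y) - (q x + q y)) / 2 with hε
    have hεpos : 0 < ε := by simp only [hε]; linarith
    obtain ⟨a, haA, ha⟩ := Real.lt_sInf_add_pos (hAne x) hεpos
    obtain ⟨b, hbA, hb⟩ := Real.lt_sInf_add_pos (hAne y) hεpos
    obtain ⟨c₁, hc₁, rfl⟩ := haA
    obtain ⟨c₂, hc₂, rfl⟩ := hbA
    have h1 : q (x + y) ≤ p (x + y + (c₁ + c₂)) :=
      hq_le _ _ (D.cone_add c₁ hc₁ c₂ hc₂)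
    have h2 : p (x + y + (c₁ + c₂)) ≤ p (x + c₁) + p (y + c₂) := by
      have : x + y + (c₁ + c₂) = (x + c₁) + (y + c₂) := by abel
      rw [this]
      exact map_add_le_add p _ _
    have : q (x + y) ≤ q x + q y + 2 * ε := by
      calc q (x + y) ≤ p (x + c₁) + p (y + c₂) := h1.trans h2
        _ ≤ (sInf (A x) + ε) + (sInf (A y) + ε) := add_le_add ha.le hb.le
        _ = q x + q y + 2 * ε := by simp only [hqdef]; ring
    simp only [hε] at this
    linarith
  have N_hom : ∀ t : ℝ, 0 < t → ∀ w : Z, q (t • w) = t * q w := by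
    intro t ht w
    have hts : ∀ v : Z, t • v = (t : ℂ) • v := fun v => rfl
    have hp_smul : ∀ v : Z, p ((t : ℂ) • v) = t * p v := by
      intro v
      rw [map_smul_eq_mul]
      congr 1
      simp [Complex.norm_real, abs_of_pos ht]
    apply le_antisymm
    · rw [← sub_nonneg]
      have : q (t • w) / t ≤ q w := by
        refine le_csInf (hAne w) ?_
        rintro r ⟨c, hc, rfl⟩
        rw [div_le_iff₀ ht, mul_comm]
        have hmem : (t : ℂ) • c ∈ D.cone := D.cone_smul t ht.le c hc
        have := hq_le (t • w) _ hmem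
        calc q (t • w) ≤ p (t • w + (t : ℂ) • c) := this
          _ = t * p (w + c) := by
              rw [hts w, ← smul_add, hp_smul]
      rw [div_le_iff₀ ht, mul_comm] at this
      linarith
    · refine le_csInf (hAne _) ?_
      rintro r ⟨c, hc, rfl⟩
      show t * q w ≤ p (t • w + c)
      have hmem : ((t⁻¹ : ℝ) : ℂ) • c ∈ D.cone := D.cone_smul t⁻¹ (by positivity) c hc
      have hcc : c = (t : ℂ) • (((t⁻¹ : ℝ) : ℂ) • c) := by
        rw [smul_smul, ← Complex.ofReal_mul, mul_inv_cancel₀ (ne_of_gt ht),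
          Complex.ofReal_one, one_smul]
      have key : p (t • w + c) = t * p (w + ((t⁻¹ : ℝ) : ℂ) • c) := by
        conv_lhs => rw [hcc, hts w, ← smul_add]
        rw [hp_smul]
      rw [key]
      have := hq_le w _ hmem
      nlinarith [this]
  -- the partial linear map on the span of z₀
  have Hsing : ∀ c : ℝ, c • z₀ = 0 → (RingHom.id ℝ) c • (p z₀ : ℝ) = 0 := by
    intro c hc
    by_cases hc0 : c = 0
    · simp [hc0]
    · exfalso
      apply hz₀0
      have : (c⁻¹ : ℝ) • (c • z₀) = z₀ := by
        rw [smul_smul, inv_mul_cancel₀ hc0, one_smul]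
      rw [hc, smul_zero] at this
      exact this.symm
  have hf_dom : ∀ x : (LinearPMap.mkSpanSingleton' z₀ (p z₀ : ℝ) Hsing).domain,
      (LinearPMap.mkSpanSingleton' z₀ (p z₀ : ℝ) Hsing) x ≤ q x := by
    intro x
    have hx2 : (x : Z) ∈ Submodule.span ℝ {z₀} := by
      have hd := LinearPMap.domain_mkSpanSingleton z₀ (p z₀ : ℝ) Hsing
      rw [← hd]
      exact x.2
    obtain ⟨t, ht⟩ := Submodule.mem_span_singleton.mp hx2
    have hmem2 : t • z₀ ∈ (LinearPMap.mkSpanSingleton' z₀ (p z₀ : ℝ) Hsing).domain := by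
      rw [ht]; exact x.2
    have hxe : x = ⟨t • z₀, hmem2⟩ := Subtype.ext ht.symm
    rw [hxe, LinearPMap.mkSpanSingleton'_apply]
    show t • (p z₀ : ℝ) ≤ q (t • z₀)
    rcases le_or_gt t 0 with htn | htp
    · have h1 : t • (p z₀ : ℝ) ≤ 0 := by
        rw [smul_eq_mul]
        exact mul_nonpos_of_nonpos_of_nonneg htn (apply_nonneg p _)
      exact h1.trans (hq_nonneg _)
    · have hmem : t • z₀ ∈ D.cone := by
        have : (t : ℂ) • z₀ ∈ D.cone := D.cone_smul t htp.le z₀ hz₀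
        exact this
      refine le_csInf (hAne _) ?_
      rintro r ⟨c, hc, rfl⟩
      show t • (p z₀ : ℝ) ≤ p (t • z₀ + c)
      have h1 : p (t • z₀) ≤ p (t • z₀ + c) := by
        refine hinc _ _ hmem ?_
        simpa using hc
      have h2 : p (t • z₀) = t * p z₀ := by
        have : (t • z₀ : Z) = (t : ℂ) • z₀ := rfl
        rw [this, map_smul_eq_mul]
        congr 1
        simp [Complex.norm_real, abs_of_pos htp]
      rw [smul_eq_mul]
      rw [h2] at h1
      exact h1
  obtain ⟨G, hGeq, hGle⟩ := exists_extension_of_le_sublinear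
    (LinearPMap.mkSpanSingleton' z₀ (p z₀ : ℝ) Hsing) q N_hom N_add hf_dom
  have hGz₀ : G z₀ = p z₀ := by
    have hmem : z₀ ∈ (LinearPMap.mkSpanSingleton' z₀ (p z₀ : ℝ) Hsing).domain := by
      rw [LinearPMap.domain_mkSpanSingleton]
      exact Submodule.mem_span_singleton_self z₀
    have h := hGeq ⟨z₀, hmem⟩
    rw [h, LinearPMap.mkSpanSingleton'_apply_self]
  have hGpos : ∀ c ∈ D.cone, 0 ≤ G c := by
    intro c hc
    have h1 : G (-c) ≤ q (-c) := hGle _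
    have h2 : q (-c) ≤ 0 := hq_neg c hc
    have h3 : G (-c) = -G c := map_neg G c
    rw [h3] at h1
    linarith
  have hGle_p : ∀ c, G c ≤ p c := fun c => (hGle c).trans (hq_le_p c)
  -- symmetrized real part, as a real-linear map
  have star_real_smul : ∀ (t : ℝ) (z : Z), D.star (t • z) = t • D.star z := by
    intro t z
    have h1 : (t • z : Z) = (t : ℂ) • z := rfl
    have h2 : (t • D.star z : Z) = (t : ℂ) • D.star z := rfl
    rw [h1, h2, D.star_smul]
    congr 1
    simp [Complex.conj_ofReal]
  set starL : Z →ₗ[ℝ] Z := ⟨⟨D.star, D.star_add⟩, star_real_smul⟩ with hstarL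
  set G' : Z →ₗ[ℝ] ℝ := (1 / 2 : ℝ) • (G + G.comp starL) with hG'
  have hG'app : ∀ z : Z, G' z = (G z + G (D.star z)) / 2 := by
    intro z
    show (1 / 2 : ℝ) * (G z + G (D.star z)) = (G z + G (D.star z)) / 2
    ring
  have hG'_star : ∀ z, G' (D.star z) = G' z := by
    intro z
    rw [hG'app, hG'app, D.star_star]
    ring
  have hstar_I_smul : ∀ z : Z, D.star (Complex.I • z) = -(Complex.I • D.star z) := by
    intro z
    rw [D.star_smul]
    simp [Complex.conj_I]
  have hG'_Istar : ∀ z, G' (Complex.I • D.star z) = -G' (Complex.I • z) := by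
    intro z
    have h1 : Complex.I • D.star z = -(D.star (Complex.I • z)) := by
      rw [hstar_I_smul]
      simp
    rw [h1, map_neg, hG'_star]
  -- the complex functional
  set f : Z → ℂ := fun z => (G' z : ℂ) - Complex.I * (G' (Complex.I • z) : ℂ) with hfdef
  have hf_add : ∀ x y, f (x + y) = f x + f y := by
    intro x y
    show (G' (x + y) : ℂ) - Complex.I * (G' (Complex.I • (x + y)) : ℂ)
      = ((G' x : ℂ) - Complex.I * (G' (Complex.I • x) : ℂ))
        + ((G' y : ℂ) - Complex.I * (G' (Complex.I • y) : ℂ))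
    rw [smul_add, map_add, map_add]
    push_cast
    ring
  have hf_rsmul : ∀ (t : ℝ) (z : Z), f ((t : ℂ) • z) = (t : ℂ) * f z := by
    intro t z
    have e1 : ((t : ℂ) • z : Z) = t • z := Complex.coe_smul t z
    have e2 : Complex.I • ((t : ℂ) • z) = t • (Complex.I • z) := by
      rw [smul_smul, mul_comm, ← smul_smul, Complex.coe_smul]
    show (G' ((t : ℂ) • z) : ℂ) - Complex.I * (G' (Complex.I • ((t : ℂ) • z)) : ℂ)
      = (t : ℂ) * ((G' z : ℂ) - Complex.I * (G' (Complex.I • z) : ℂ))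
    rw [e2, e1, map_smul, map_smul]
    push_cast [smul_eq_mul]
    ring
  have hf_I : ∀ z, f (Complex.I • z) = Complex.I * f z := by
    intro z
    have h1 : Complex.I • (Complex.I • z) = -z := by
      rw [smul_smul, Complex.I_mul_I, neg_one_smul]
    show (G' (Complex.I • z) : ℂ) - Complex.I * (G' (Complex.I • (Complex.I • z)) : ℂ)
      = Complex.I * ((G' z : ℂ) - Complex.I * (G' (Complex.I • z) : ℂ))
    rw [h1, map_neg, mul_sub, ← mul_assoc, Complex.I_mul_I]
    push_cast
    ring
  have hf_smul : ∀ (a : ℂ) (x : Z), f (a • x) = a * f x := by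
    intro a x
    have hdecomp : a • x = ((a.re : ℂ)) • x + ((a.im : ℂ)) • (Complex.I • x) := by
      rw [smul_smul, ← add_smul]
      congr 1
      simp [Complex.ext_iff]
    rw [hdecomp, hf_add, hf_rsmul, hf_rsmul, hf_I]
    have ha : a = (a.re : ℂ) + (a.im : ℂ) * Complex.I := by
      simp [Complex.ext_iff]
    conv_rhs => rw [ha]
    ring
  have hf_star : ∀ z, f (D.star z) = (starRingEnd ℂ) (f z) := by
    intro z
    show (G' (D.star z) : ℂ) - Complex.I * (G' (Complex.I • D.star z) : ℂ)
      = (starRingEnd ℂ) ((G' z : ℂ) - Complex.I * (G' (Complex.I • z) : ℂ))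
    rw [hG'_star, hG'_Istar, map_sub, map_mul, Complex.conj_I, Complex.conj_ofReal,
      Complex.conj_ofReal]
    push_cast
    ring
  have hf_cone : ∀ c ∈ D.cone, ∃ r : ℝ, 0 ≤ r ∧ r ≤ p c ∧ f c = (r : ℂ) := by
    intro c hc
    refine ⟨G c, hGpos c hc, hGle_p c, ?_⟩
    have h1 : G' c = G c := by
      rw [hG'app, D.cone_star c hc]
      ring
    have h2 : G' (Complex.I • c) = 0 := by
      have h3 := hG'_Istar c
      rw [D.cone_star c hc] at h3
      linarith
    show (G' c : ℂ) - Complex.I * (G' (Complex.I • c) : ℂ) = ((G c : ℝ) : ℂ)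
    rw [h1, h2]
    simp
  refine ⟨f, hf_add, hf_smul, hf_star, hf_cone, ?_⟩
  have h1 : G' z₀ = G z₀ := by
    rw [hG'app, D.cone_star z₀ hz₀]
    ring
  have h2 : G' (Complex.I • z₀) = 0 := by
    have h3 := hG'_Istar z₀
    rw [D.cone_star z₀ hz₀] at h3
    linarith
  show (G' z₀ : ℂ) - Complex.I * (G' (Complex.I • z₀) : ℂ) = ((p z₀ : ℝ) : ℂ)
  rw [h1, h2, hGz₀]
  simp

/-- Discriminant argument. -/
private lemma cs_aux {a b n : ℝ} (ha : 0 ≤ a) (hb : 0 ≤ b) (hn : 0 ≤ n)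
    (h : ∀ t : ℝ, 0 ≤ a - 2 * t * n + t ^ 2 * n * b) : n ≤ a * b := by
  rcases eq_or_lt_of_le hn with h0 | hn0
  · nlinarith [mul_nonneg ha hb]
  rcases eq_or_lt_of_le hb with hb0 | hb0
  · exfalso
    have h1 := h ((a + 1) / (2 * n))
    rw [← hb0] at h1
    have hne : (n : ℝ) ≠ 0 := ne_of_gt hn0
    have h2 : a - 2 * ((a + 1) / (2 * n)) * n + ((a + 1) / (2 * n)) ^ 2 * n * 0 = -1 := by
      field_simp
      ring
    rw [h2] at h1
    linarith
  · have h1 := h (1 / b)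
    have hb' : (b : ℝ) ≠ 0 := ne_of_gt hb0
    have h2 : a - 2 * (1 / b) * n + (1 / b) ^ 2 * n * b = a - n / b := by
      field_simp
      ring
    rw [h2] at h1
    have h3 : n / b ≤ a := by linarith
    rw [div_le_iff₀ hb0] at h3
    linarith [h3]

section Transfer

variable {E : Type*} [AddCommGroup E] [Module ℂ E]
variable {F : Type*} [AddCommGroup F] [Module ℂ F]

/-- Left conjugate-linearity of the gramian, derived from the axioms. -/
private lemma inner_smul_left' {D : OrderedStarData Z} (B : Gramian D E) (a : ℂ) (x y : E) :
    B.inner (a • x) y = (starRingEnd ℂ) a • B.inner x y := by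
  rw [B.inner_herm, B.inner_smul_right, D.star_smul, ← B.inner_herm]

private lemma inner_add_left' {D : OrderedStarData Z} (B : Gramian D E) (x₁ x₂ y : E) :
    B.inner (x₁ + x₂) y = B.inner x₁ y + B.inner x₂ y := by
  rw [B.inner_herm, B.inner_add_right, D.star_add, ← B.inner_herm, ← B.inner_herm]

/-- Key transfer lemma: a bound for `T` is a bound for its adjoint `S`. -/
theorem bound_transfer {D : OrderedStarData Z}
    (BE : Gramian D E) (BF : Gramian D F) (p : Seminorm ℂ Z)
    (hinc : D.Increasing p) (hstar : D.StarSeminorm p)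
    (T : E →ₗ[ℂ] F) (S : F →ₗ[ℂ] E) (hadj : BE.IsAdjoint BF T S)
    (C : ℝ) (hC : 0 ≤ C) (hb : ∀ x, BF.tilde p (T x) ≤ C * BE.tilde p x) :
    ∀ y, BE.tilde p (S y) ≤ C * BF.tilde p y := by
  intro y
  set u : F := T (S y) with hu
  set v : F := y with hv
  set z₀ : Z := BE.inner (S y) (S y) with hz₀def
  have hz₀ : z₀ ∈ D.cone := BE.inner_self_mem _
  obtain ⟨f, hf_add, hf_smul, hf_star, hf_cone, hf_z₀⟩ :=
    D.exists_pos_functional p hinc hstar z₀ hz₀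
  have key1 : z₀ = BF.inner u v := (hadj (S y) y).symm
  -- Cauchy–Schwarz for the scalar form f ∘ inner
  obtain ⟨a, ha0, hap, hae⟩ := hf_cone (BF.inner u u) (BF.inner_self_mem u)
  obtain ⟨b, hb0, hbp, hbe⟩ := hf_cone (BF.inner v v) (BF.inner_self_mem v)
  set c : ℂ := f (BF.inner u v) with hcdef
  have hvu : f (BF.inner v u) = (starRingEnd ℂ) c := by
    rw [hcdef, ← hf_star, ← BF.inner_herm]
  have hCS : Complex.normSq c ≤ a * b := by
    refine cs_aux ha0 hb0 (Complex.normSq_nonneg c) ?_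
    intro t
    set lam : ℂ := (-t : ℝ) * (starRingEnd ℂ) c with hlam
    have hexp1 : BF.inner (u + lam • v) (u + lam • v)
        = BF.inner u u + ((starRingEnd ℂ) lam • BF.inner v u + (lam • BF.inner u v
          + (lam * (starRingEnd ℂ) lam) • BF.inner v v)) := by
      rw [BF.inner_add_right, BF.inner_smul_right, inner_add_left' BF, inner_add_left' BF,
        inner_smul_left' BF, inner_smul_left' BF, smul_add, smul_smul]
      abel
    have hexp : f (BF.inner (u + lam • v) (u + lam • v))
        = (a : ℂ) + ((starRingEnd ℂ) lam * (starRingEnd ℂ) c + (lam * c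
          + (lam * (starRingEnd ℂ) lam) * (b : ℂ))) := by
      rw [hexp1, hf_add, hf_add, hf_add, hf_smul, hf_smul, hf_smul, hae, hbe, hvu, ← hcdef]
    obtain ⟨r, hr0, _, hre⟩ :=
      hf_cone (BF.inner (u + lam • v) (u + lam • v)) (BF.inner_self_mem _)
    rw [hre] at hexp
    have hcc : (starRingEnd ℂ) c * c = ((Complex.normSq c : ℝ) : ℂ) := by
      rw [mul_comm, Complex.mul_conj]
    have hlc : lam * c = ((-(t * Complex.normSq c) : ℝ) : ℂ) := by
      rw [hlam, mul_assoc, hcc]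
      push_cast
      ring
    have hclc : (starRingEnd ℂ) lam * (starRingEnd ℂ) c = ((-(t * Complex.normSq c) : ℝ) : ℂ) := by
      rw [← map_mul, hlc, Complex.conj_ofReal]
    have hll : lam * (starRingEnd ℂ) lam = ((t ^ 2 * Complex.normSq c : ℝ) : ℂ) := by
      rw [Complex.mul_conj]
      norm_cast
      rw [hlam, Complex.normSq_mul, Complex.normSq_conj, Complex.normSq_ofReal]
      ring
    have hsum : ((r : ℝ) : ℂ)
        = ((a - 2 * t * Complex.normSq c + t ^ 2 * Complex.normSq c * b : ℝ) : ℂ) := by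
      rw [hexp, hclc, hlc, hll]
      push_cast
      ring
    have hreq : r = a - 2 * t * Complex.normSq c + t ^ 2 * Complex.normSq c * b :=
      Complex.ofReal_inj.mp hsum
    rw [← hreq]
    exact hr0
  -- conclude
  have hpz₀ : (p z₀ : ℝ) * p z₀ ≤ p (BF.inner u u) * p (BF.inner v v) := by
    have h1 : Complex.normSq c = (p z₀ : ℝ) * p z₀ := by
      have hc' : c = ((p z₀ : ℝ) : ℂ) := by rw [hcdef, ← key1, hf_z₀]
      rw [hc', Complex.normSq_ofReal]
    calc (p z₀ : ℝ) * p z₀ = Complex.normSq c := h1.symm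
      _ ≤ a * b := hCS
      _ ≤ p (BF.inner u u) * p (BF.inner v v) :=
          mul_le_mul hap hbp hb0 (apply_nonneg p _)
  have htE : BE.tilde p (S y) = Real.sqrt (p z₀) := rfl
  have htu : BF.tilde p u = Real.sqrt (p (BF.inner u u)) := rfl
  have htv : BF.tilde p v = Real.sqrt (p (BF.inner v v)) := rfl
  have hineq : p z₀ ≤ BF.tilde p u * BF.tilde p v := by
    rw [htu, htv, ← Real.sqrt_mul (apply_nonneg p _)]
    have h2 : (p z₀ : ℝ) = Real.sqrt ((p z₀) * (p z₀)) :=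
      (Real.sqrt_mul_self (apply_nonneg p _)).symm
    rw [h2]
    exact Real.sqrt_le_sqrt hpz₀
  have hTu : BF.tilde p u ≤ C * BE.tilde p (S y) := hb (S y)
  have htE_nonneg : 0 ≤ BE.tilde p (S y) := Real.sqrt_nonneg _
  have htv_nonneg : 0 ≤ BF.tilde p v := Real.sqrt_nonneg _
  have htEsq : BE.tilde p (S y) * BE.tilde p (S y) = p z₀ := by
    rw [htE]
    exact Real.mul_self_sqrt (apply_nonneg p _)
  rcases eq_or_lt_of_le htE_nonneg with h0 | hpos
  · rw [← h0]
    exact mul_nonneg hC htv_nonneg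
  · have hchain : BE.tilde p (S y) * BE.tilde p (S y) ≤ (C * BE.tilde p (S y)) * BF.tilde p v := by
      rw [htEsq]
      calc p z₀ ≤ BF.tilde p u * BF.tilde p v := hineq
        _ ≤ (C * BE.tilde p (S y)) * BF.tilde p v :=
            mul_le_mul_of_nonneg_right hTu htv_nonneg
    have hv' : BF.tilde p y = BF.tilde p v := rfl
    rw [hv']
    nlinarith
end Transfer

end AuxProof

/-- The adjoint of an `S₀`-bounded adjointable operator between topological
VE-spaces is `S₀`-bounded, with the same operator seminorms. -/
theorem statement2 {Z E F : Type*} [AddCommGroup Z] [Module ℂ Z] [TopologicalSpace Z]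
    [AddCommGroup E] [Module ℂ E] [TopologicalSpace E]
    [AddCommGroup F] [Module ℂ F] [TopologicalSpace F]
    (D : TopOrderedStarSpace Z)
    (BE : Gramian D.toOrderedStarData E) (BF : Gramian D.toOrderedStarData F)
    (S₀ : Set (Seminorm ℂ Z)) (hS₀ : ∀ p ∈ S₀, D.MemSStar p)
    (hS₀gen : GeneratesTopology S₀)
    (hE : BE.IsVETopology S₀) (hF : BF.IsVETopology S₀)
    (T : E →ₗ[ℂ] F) (S : F →ₗ[ℂ] E) (hadj : BE.IsAdjoint BF T S)
    (hTb : ∀ p ∈ S₀, BE.BoundedFor BF T p) :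
    (∀ p ∈ S₀, BF.BoundedFor BE S p) ∧
    (∀ p ∈ S₀, BF.opSeminorm BE S p = BE.opSeminorm BF T p) :=  by
  have hadj' : BF.IsAdjoint BE S T := by
    intro y x
    rw [BE.inner_herm, ← hadj x y, ← BF.inner_herm]
  have hSb : ∀ p ∈ S₀, BF.BoundedFor BE S p := by
    intro p hp
    obtain ⟨C, hC, hbd⟩ := hTb p hp
    exact ⟨C, hC, bound_transfer BE BF p (hS₀ p hp).2.1 (hS₀ p hp).2.2 T S hadj C hC hbd⟩
  refine ⟨hSb, fun p hp => ?_⟩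
  unfold Gramian.opSeminorm
  congr 1
  ext C
  constructor
  · rintro ⟨hC, hbd⟩
    exact ⟨hC, bound_transfer BF BE p (hS₀ p hp).2.1 (hS₀ p hp).2.2 S T hadj' C hC hbd⟩
  · rintro ⟨hC, hbd⟩
    exact ⟨hC, bound_transfer BE BF p (hS₀ p hp).2.1 (hS₀ p hp).2.2 T S hadj C hC hbd⟩
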